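/- Let k be an integer and let T be a d×d complex matrix of charge k, i.e. Z·T = q^k·(T·Z). Then C_Z (T ⊗ 1) C_Z⁻¹ = T ⊗ Z^k, where C_Z is the controlled-Z gate on 2-qudits. -/

import Mathlib

open Kronecker

/-- The qudit Pauli matrix `Z`, with `Z e_k = q^k e_k`. -/
noncomputable def Zmat (d : ℕ) (q : ℂ) : Matrix (ZMod d) (ZMod d) ℂ :=
  Matrix.of fun j k => if j = k then q ^ k.val else 0

/-- The controlled-Z gate on 2-qudits: `C_Z e_{(k₁,k₂)} = q^{k₁k₂} e_{(k₁,k₂)}`. -/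
noncomputable def CZmat (d : ℕ) (q : ℂ) :
    Matrix (ZMod d × ZMod d) (ZMod d × ZMod d) ℂ :=
  Matrix.of fun p r => if p = r then q ^ (r.1.val * r.2.val) else 0

lemma diag_inv_aux {n : Type*} [Fintype n] [DecidableEq n] (v : n → ℂ) (h : ∀ j, v j ≠ 0) :
    (Matrix.diagonal v)⁻¹ = Matrix.diagonal (fun j => (v j)⁻¹) := by
  apply Matrix.inv_eq_right_inv
  rw [Matrix.diagonal_mul_diagonal]
  simp [mul_inv_cancel₀, h]

lemma Zmat_eq_diag (d : ℕ) (q : ℂ) :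
    Zmat d q = Matrix.diagonal (fun j : ZMod d => q ^ j.val) := by
  ext j k
  by_cases h : j = k <;> simp [Zmat, Matrix.diagonal, h]

lemma CZmat_eq_diag (d : ℕ) (q : ℂ) :
    CZmat d q = Matrix.diagonal (fun p : ZMod d × ZMod d => q ^ (p.1.val * p.2.val)) := by
  ext p r
  by_cases h : p = r <;> simp [CZmat, Matrix.diagonal, h]

lemma Zmat_zpow (d : ℕ) [NeZero d] (q : ℂ) (hq : q ≠ 0) (k : ℤ) :
    Zmat d q ^ k = Matrix.diagonal (fun j : ZMod d => (q ^ j.val) ^ k) := by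
  rw [Zmat_eq_diag]
  cases k with
  | ofNat n =>
    simp only [Int.ofNat_eq_coe, zpow_natCast, Matrix.diagonal_pow]
    congr 1
  | negSucc n =>
    simp only [zpow_negSucc, Matrix.diagonal_pow]
    have : ((fun j : ZMod d => q ^ j.val) ^ (n+1)) = fun j : ZMod d => (q ^ j.val) ^ (n+1) := by
      funext j; simp [Pi.pow_apply]
    rw [this, diag_inv_aux _ (fun j => pow_ne_zero _ (pow_ne_zero _ hq))]

/-- if `T` has charge `k`, i.e. `Z·T = q^k·(T·Z)`, then
`C_Z (T ⊗ 1) C_Z⁻¹ = T ⊗ Z^k`. -/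
theorem stmt_5 (d : ℕ) [NeZero d] (q : ℂ)
    (hq : q = Complex.exp (2 * Real.pi * Complex.I / d)) (k : ℤ)
    (T : Matrix (ZMod d) (ZMod d) ℂ)
    (hT : Zmat d q * T = q ^ k • (T * Zmat d q)) :
    CZmat d q * (T ⊗ₖ (1 : Matrix (ZMod d) (ZMod d) ℂ)) * (CZmat d q)⁻¹
      = T ⊗ₖ (Zmat d q ^ k) := by
  have hq0 : q ≠ 0 := by rw [hq]; exact Complex.exp_ne_zero _
  -- entrywise form of the charge condition
  have hTe : ∀ a c : ZMod d, q ^ a.val * T a c = q ^ k * (T a c * q ^ c.val) := by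
    intro a c
    have := congrFun (congrFun hT a) c
    simpa [Zmat_eq_diag, Matrix.diagonal_mul, Matrix.mul_diagonal, mul_comm] using this
  rw [CZmat_eq_diag, Zmat_zpow d q hq0,
    diag_inv_aux _ (fun p => pow_ne_zero _ hq0)]
  ext ⟨a, b⟩ ⟨c, e⟩
  rw [Matrix.mul_diagonal, Matrix.diagonal_mul]
  simp only [Matrix.kroneckerMap_apply, Matrix.diagonal, Matrix.one_apply, Matrix.of_apply]
  by_cases hbe : b = e
  · subst hbe
    simp only [if_pos rfl, mul_one, if_true]
    by_cases hT0 : T a c = 0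
    · simp [hT0]
    · have key : q ^ a.val = q ^ k * q ^ c.val := by
        have := hTe a c
        field_simp at this
        exact mul_right_cancel₀ hT0 (by linear_combination T a c * this)
      have expand : (q:ℂ) ^ (a.val * b.val) * T a c * ((q:ℂ) ^ (c.val * b.val))⁻¹
          = T a c * ((q ^ a.val) ^ b.val * ((q ^ c.val) ^ b.val)⁻¹) := by
        rw [pow_mul, pow_mul]; ring
      rw [expand, key]
      rw [mul_pow]
      rw [mul_assoc, mul_inv_cancel₀ (pow_ne_zero _ (pow_ne_zero _ hq0)), mul_one]
      congr 1
      rw [← zpow_natCast (q^k) b.val, ← zpow_natCast q b.val, ← zpow_mul, ← zpow_mul, mul_comm]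
  · simp [hbe]
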